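/- (Detector error channel for a pair of syndrome-extraction gadgets.) For every detector value D ∈ G and every ρ ∈ M with Π₀ * ρ * Π₀ = ρ, one has ∑_{s∈G} I_{D+s}(I_s(ρ)) = ∑_{m₁,m₂ ∈ G} P^{m₂}(P^{m₁}_{D+m₁+m₂}(ρ)); that is, the sum over all pairs of syndrome outcomes with parity D of two composed noisy syndrome-extraction instruments applied to a codespace-supported state equals the detector error channel E^D(ρ), which depends only on the internal errors and the detector value D. -/
import Mathlib


open Matrix

/-- Detector error channel for a pair of syndrome-extraction gadgets: on a
codespace-supported state `ρ`, the sum over all pairs of syndrome outcomes with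
parity `D` of two composed noisy syndrome-extraction instruments equals the
detector error channel `E^D(ρ) = ∑_{m₁,m₂} P^{m₂}(P^{m₁}_{D+m₁+m₂}(ρ))`. -/
theorem detector_pair_channel (d k : ℕ)
    (Pr : (Fin k → ZMod 2) → Matrix (Fin d) (Fin d) ℂ)
    (hHerm : ∀ a, (Pr a).IsHermitian)
    (hOrth : ∀ a b, a ≠ b → Pr a * Pr b = 0)
    (hIdem : ∀ a, Pr a * Pr a = Pr a)
    (hSum : ∑ a, Pr a = 1)
    (P : (Fin k → ZMod 2) → (Fin k → ZMod 2) →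
      Module.End ℂ (Matrix (Fin d) (Fin d) ℂ))
    (Ptot : (Fin k → ZMod 2) → Module.End ℂ (Matrix (Fin d) (Fin d) ℂ))
    (hPtot : ∀ m, Ptot m = ∑ e, P m e)
    (hProp : ∀ m a b σ,
      Pr b * (Ptot m (Pr a * σ * Pr a)) * Pr b = P m (a + b) (Pr a * σ * Pr a))
    (hSupp : ∀ m e a σ,
      P m e (Pr a * σ * Pr a)
        = Pr (a + e) * (P m e (Pr a * σ * Pr a)) * Pr (a + e))
    (I : (Fin k → ZMod 2) → Module.End ℂ (Matrix (Fin d) (Fin d) ℂ))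
    (hI : ∀ s σ, I s σ = ∑ m, Ptot m (Pr (m + s) * σ * Pr (m + s)))
    (D : Fin k → ZMod 2)
    (ρ : Matrix (Fin d) (Fin d) ℂ) (hρ : Pr 0 * ρ * Pr 0 = ρ) :
    ∑ s, I (D + s) (I s ρ) = ∑ m₁, ∑ m₂, Ptot m₂ (P m₁ (D + m₁ + m₂) ρ) := by

  have hself : ∀ x : Fin k → ZMod 2, x + x = 0 := by
    intro x; funext i; exact CharTwo.add_self_eq_zero (x i)
  have h2 : ∀ (a : Fin k → ZMod 2) (X : Matrix (Fin d) (Fin d) ℂ),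
      Pr a * (Pr a * X) = Pr a * X := by
    intro a X; rw [← mul_assoc, hIdem]
  have h3 : ∀ (a b : Fin k → ZMod 2), a ≠ b → ∀ (X : Matrix (Fin d) (Fin d) ℂ),
      Pr a * (Pr b * X) = 0 := by
    intro a b hab X; rw [← mul_assoc, hOrth a b hab, zero_mul]
  have sandwich : ∀ (a b : Fin k → ZMod 2) (σ : Matrix (Fin d) (Fin d) ℂ),
      Pr a * (Pr b * σ * Pr b) * Pr a
        = if a = b then Pr b * σ * Pr b else 0 := by
    intro a b σ
    by_cases hab : a = b
    · subst hab
      simp [mul_assoc, h2, hIdem]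
    · simp only [if_neg hab, mul_assoc, h3 a b hab, zero_mul]
  have hIρ : ∀ s, I s ρ = Ptot s ρ := by
    intro s
    rw [hI]
    rw [Finset.sum_eq_single s]
    · rw [hself s]
      exact congrArg _ hρ
    · intro m _ hms
      conv_lhs => rw [← hρ]
      rw [sandwich (m + s) 0 ρ, if_neg, map_zero]
      intro h
      apply hms
      have : m + s + s = 0 + s := by rw [h]
      rwa [add_assoc, hself, add_zero, zero_add] at this
    · intro h; exact absurd (Finset.mem_univ s) h
  calc ∑ s, I (D + s) (I s ρ)
      = ∑ s, ∑ m, Ptot m (P s (D + s + m) ρ) := by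
        refine Finset.sum_congr rfl fun s _ => ?_
        rw [hIρ s, hI]
        refine Finset.sum_congr rfl fun m _ => ?_
        congr 1
        conv_lhs => rw [← hρ]
        rw [hProp s 0 (m + (D + s)) ρ, hρ]
        have : (0 : Fin k → ZMod 2) + (m + (D + s)) = D + s + m := by abel
        rw [this]
    _ = ∑ m₁, ∑ m₂, Ptot m₂ (P m₁ (D + m₁ + m₂) ρ) := rfl
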